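/- For the k-serial-parallel graph G_{SP(k)}, the set {(s,b_1),(a_2,b_2),...,(a_{k-1},b_{k-1}),(a_k,t)} is both serial and parallel, and hence SPW(G_{SP(k)}) ≥ k. -/

import Mathlib

variable {V : Type*}

/-- `p` is a simple directed path in the edge relation `E`. -/
def IsDiPath (E : V → V → Prop) (p : List V) : Prop := p.Chain' E ∧ p.Nodup

/-- `p` is a simple directed path from `x` to `y`. -/
def PathFrom (E : V → V → Prop) (p : List V) (x y : V) : Prop :=
  IsDiPath E p ∧ p.head? = some x ∧ p.getLast? = some y

/-- the edge `(a,b)` is traversed by the path `p`. -/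
def EdgeOn (a b : V) (p : List V) : Prop := (a, b) ∈ p.zip p.tail

/-- directed reachability. -/
def Reach (E : V → V → Prop) : V → V → Prop := Relation.ReflTransGen E

/-- no directed cycles. -/
def Acyclic (E : V → V → Prop) : Prop := ∀ a b, E a b → ¬ Reach E b a

/-- 2-terminal graph (edge version): no self-loops, some `s`-`t` path exists and
every edge lies on a simple `s`-`t` path. -/
def TwoTerminalE (E : V → V → Prop) (s t : V) : Prop :=
  (∀ v, ¬ E v v) ∧ (∃ p, PathFrom E p s t) ∧
  ∀ a b, E a b → ∃ p, PathFrom E p s t ∧ EdgeOn a b p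

/-- 2-terminal graph (full version): no self-loops and every vertex and edge
lies on a simple `s`-`t` path. -/
def TwoTerminalF (E : V → V → Prop) (s t : V) : Prop :=
  (∀ v, ¬ E v v) ∧ (∀ v, ∃ p, PathFrom E p s t ∧ v ∈ p) ∧
  ∀ a b, E a b → ∃ p, PathFrom E p s t ∧ EdgeOn a b p

/-- `C` is an `s`-`t` edge cut. -/
def IsCut (E : V → V → Prop) (s t : V) (C : Set (V × V)) : Prop :=
  (∀ e ∈ C, E e.1 e.2) ∧ ¬ ∃ p, PathFrom (fun a b => E a b ∧ (a, b) ∉ C) p s t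

def IsMinCut (E : V → V → Prop) (s t : V) (C : Set (V × V)) : Prop :=
  IsCut E s t C ∧ ∀ C' ⊂ C, ¬ IsCut E s t C'

/-- `S` is parallel: contained in some minimal `s`-`t` cut. -/
def Parallel (E : V → V → Prop) (s t : V) (S : Set (V × V)) : Prop :=
  ∃ C, IsMinCut E s t C ∧ S ⊆ C

/-- `S` is serial: contained in a simple directed `s`-`t` path. -/
def Serial (E : V → V → Prop) (s t : V) (S : Set (V × V)) : Prop :=
  ∃ p, PathFrom E p s t ∧ ∀ e ∈ S, EdgeOn e.1 e.2 p

/-- The k-serial-parallel graph `G_{SP(k)}` on vertices `(false, i) = aᵢ₊₁`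
(with `a₁ = s`) and `(true, i) = bᵢ₊₁` (with `b_k = t`), 0-indexed. -/
def SPGraph (k : ℕ) : (Bool × Fin k) → (Bool × Fin k) → Prop := fun u v =>
  (u.1 = false ∧ v.1 = false ∧ u.2.val = 0 ∧ 1 ≤ v.2.val) ∨
  (u.1 = false ∧ v.1 = true ∧ u.2 = v.2) ∨
  (u.1 = true ∧ v.1 = true ∧ u.2.val < k - 1 ∧ v.2.val = k - 1) ∨
  (u.1 = true ∧ v.1 = false ∧ v.2.val = u.2.val + 1)
lemma edgeOn_of_getElem {p : List V} {j : ℕ} (hj : j + 1 < p.length) :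
    EdgeOn (p[j]'(by omega)) p[j+1] p := by
  unfold EdgeOn
  rw [List.mem_iff_getElem]
  refine ⟨j, by simp [List.length_zip, List.length_tail]; omega, ?_⟩
  rw [List.getElem_zip, List.getElem_tail]

lemma pathFrom_reach {E : V → V → Prop} {p : List V} {x y : V}
    (h : PathFrom E p x y) : Reach E x y := by
  obtain ⟨⟨hc, _⟩, hh, hl⟩ := h
  cases p with
  | nil => simp at hh
  | cons a l =>
    simp at hh
    subst hh
    refine List.relationReflTransGen_of_exists_isChain_cons l hc ?_
    rw [List.getLast?_eq_getLast (l := a :: l) (by simp)] at hl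
    exact Option.some_injective _ hl

theorem stmt15 (k : ℕ) (hk : 2 ≤ k) :
    let s : Bool × Fin k := (false, ⟨0, by omega⟩)
    let t : Bool × Fin k := (true, ⟨k - 1, by omega⟩)
    let S : Set ((Bool × Fin k) × (Bool × Fin k)) :=
      {e | ∃ i : Fin k, e = ((false, i), (true, i))}
    Serial (SPGraph k) s t S ∧ Parallel (SPGraph k) s t S ∧
      ∃ F : Finset ((Bool × Fin k) × (Bool × Fin k)),
        ↑F = S ∧ k ≤ F.card := by
  intro s t S
  have hk0 : 0 < k := Nat.lt_of_lt_of_le Nat.zero_lt_two hk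
  refine ⟨?_, ?_, ?_⟩
  · -- Serial
    set p : List (Bool × Fin k) :=
      List.ofFn (fun j : Fin (2*k) => ((decide (j.val % 2 = 1) : Bool),
        (⟨j.val / 2, by omega⟩ : Fin k))) with hp
    have hplen : p.length = 2*k := by simp [hp]
    have hget : ∀ (j : ℕ) (h : j < p.length),
        p[j] = ((decide (j % 2 = 1) : Bool), (⟨j / 2, by rw [hplen] at h; omega⟩ : Fin k)) := by
      intro j h
      simp [hp, List.getElem_ofFn]
    refine ⟨p, ⟨⟨?_, ?_⟩, ?_, ?_⟩, ?_⟩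
    · rw [List.Chain', List.isChain_iff_getElem]
      intro i hi
      rw [hplen] at hi
      rw [hget i (by omega), hget (i+1) (by omega)]
      rcases Nat.even_or_odd i with he | ho
      · obtain ⟨m, hm⟩ := he
        right; left
        refine ⟨by simp [hm]; omega, by simp [hm]; omega, ?_⟩
        apply Fin.ext; simp; omega
      · obtain ⟨m, hm⟩ := ho
        right; right; right
        refine ⟨by simp [hm], by simp [hm]; omega, by simp; omega⟩
    · rw [List.nodup_iff_injective_get]
      intro ⟨i, hi⟩ ⟨j, hj⟩ hij
      simp only [List.get_eq_getElem] at hij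
      rw [hplen] at hi hj
      rw [hget i (by omega), hget j (by omega)] at hij
      have h1 : (decide (i % 2 = 1) : Bool) = decide (j % 2 = 1) := congrArg Prod.fst hij
      have h2 : i / 2 = j / 2 := congrArg (fun x => (x.2 : Fin k).val) hij
      rw [decide_eq_decide] at h1
      apply Fin.ext; simp; omega
    · rw [List.head?_eq_getElem?, List.getElem?_eq_getElem (by rw [hplen]; omega),
        hget 0 (by rw [hplen]; omega)]
      simp [s]
    · rw [List.getLast?_eq_getElem?, hplen,
        List.getElem?_eq_getElem (by rw [hplen]; omega),
        hget (2*k-1) (by rw [hplen]; omega)]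
      have h1 : (2*k-1) % 2 = 1 := by omega
      have h2 : (2*k-1) / 2 = k - 1 := by omega
      simp [t, h1, h2]
    · rintro e ⟨i, rfl⟩
      have h1 : p[2*i.val]'(by rw [hplen]; omega) = (false, i) := by
        rw [hget (2*i.val) (by rw [hplen]; omega)]
        rw [Prod.ext_iff]
        exact ⟨by rw [decide_eq_false_iff_not]; omega, Fin.ext (by show 2*i.val/2 = i.val; omega)⟩
      have h2 : p[2*i.val+1]'(by rw [hplen]; omega) = (true, i) := by
        rw [hget (2*i.val+1) (by rw [hplen]; omega)]
        rw [Prod.ext_iff]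
        exact ⟨by rw [decide_eq_true_eq]; omega, Fin.ext (by show (2*i.val+1)/2 = i.val; omega)⟩
      have := edgeOn_of_getElem (p := p) (j := 2*i.val) (by rw [hplen]; have := i.isLt; omega)
      rwa [h1, h2] at this
  · -- Parallel
    refine ⟨S, ⟨⟨?_, ?_⟩, ?_⟩, subset_rfl⟩
    · rintro e ⟨i, rfl⟩
      right; left; exact ⟨rfl, rfl, rfl⟩
    · rintro ⟨q, hq⟩
      have hr := pathFrom_reach hq
      have key : ∀ v, Reach (fun a b => SPGraph k a b ∧ (a, b) ∉ S) s v → v.1 = false := by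
        intro v hv
        induction hv with
        | refl => rfl
        | tail _ hbc ih =>
          obtain ⟨hE, hnS⟩ := hbc
          rcases hE with ⟨_, h, _⟩ | ⟨hb, hc, hbc2⟩ | ⟨hb, _, _⟩ | ⟨hb, _, _⟩
          · exact h
          · exfalso
            apply hnS
            rename_i b c _
            refine ⟨b.2, ?_⟩
            simp [Prod.ext_iff, hb, hc, hbc2]
          · rw [hb] at ih; simp at ih
          · rw [hb] at ih; simp at ih
      have := key t hr
      simp [t] at this
    · rintro C' hss hcut'
      obtain ⟨e, heS, heC⟩ := Set.exists_of_ssubset hss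
      obtain ⟨i, rfl⟩ := heS
      have hsubS : C' ⊆ S := hss.1
      apply hcut'.2
      rcases Nat.lt_or_ge i.val 1 with hi0 | hi1
      · -- i = 0 : path [s, (true,i), t]
        have hi : i = ⟨0, hk0⟩ := Fin.ext (by show i.val = 0; omega)
        subst hi
        refine ⟨[s, (true, (⟨0, hk0⟩ : Fin k)), t], ⟨⟨?_, ?_⟩, ?_, ?_⟩⟩
        · refine List.isChain_cons_cons.2 ⟨⟨?_, ?_⟩, List.isChain_cons_cons.2 ⟨⟨?_, ?_⟩, List.isChain_singleton _⟩⟩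
          · right; left; exact ⟨rfl, rfl, rfl⟩
          · exact heC
          · right; right; left; exact ⟨rfl, rfl, by show (0:ℕ) < k - 1; omega, rfl⟩
          · intro hmem
            obtain ⟨j, hj⟩ := hsubS hmem
            have : ((true : Bool), (⟨0, hk0⟩ : Fin k)) = ((false : Bool), j) := congrArg Prod.fst hj
            simp at this
        · simp [s, t, Prod.ext_iff, Fin.ext_iff]; omega
        · rfl
        · rfl
      · rcases Nat.lt_or_ge i.val (k-1) with hikk | hik
        · -- middle : path [s, (false,i), (true,i), t]
          refine ⟨[s, (false, i), (true, i), t], ⟨⟨?_, ?_⟩, ?_, ?_⟩⟩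
          · refine List.isChain_cons_cons.2 ⟨⟨?_, ?_⟩, List.isChain_cons_cons.2 ⟨⟨?_, ?_⟩,
              List.isChain_cons_cons.2 ⟨⟨?_, ?_⟩, List.isChain_singleton _⟩⟩⟩
            · left; exact ⟨rfl, rfl, rfl, hi1⟩
            · intro hmem
              obtain ⟨j, hj⟩ := hsubS hmem
              have : ((false : Bool), i) = ((true : Bool), j) := congrArg Prod.snd hj
              simp at this
            · right; left; exact ⟨rfl, rfl, rfl⟩
            · exact heC
            · right; right; left; exact ⟨rfl, rfl, hikk, rfl⟩
            · intro hmem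
              obtain ⟨j, hj⟩ := hsubS hmem
              have : ((true : Bool), i) = ((false : Bool), j) := congrArg Prod.fst hj
              simp at this
          · simp [s, t, Prod.ext_iff, Fin.ext_iff]; omega
          · rfl
          · rfl
        · -- i = k-1 : path [s, (false,i), t]
          have hi : i = ⟨k-1, by omega⟩ := by apply Fin.ext; simp; omega
          refine ⟨[s, (false, i), t], ⟨⟨?_, ?_⟩, ?_, ?_⟩⟩
          · refine List.isChain_cons_cons.2 ⟨⟨?_, ?_⟩, List.isChain_cons_cons.2 ⟨⟨?_, ?_⟩, List.isChain_singleton _⟩⟩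
            · left; exact ⟨rfl, rfl, rfl, hi1⟩
            · intro hmem
              obtain ⟨j, hj⟩ := hsubS hmem
              have : ((false : Bool), i) = ((true : Bool), j) := congrArg Prod.snd hj
              simp at this
            · right; left; exact ⟨rfl, rfl, by rw [hi]⟩
            · have ht : t = ((true : Bool), i) := by rw [hi]
              rw [ht]; exact heC
          · simp [s, t, hi, Prod.ext_iff, Fin.ext_iff]; omega
          · rfl
          · rfl
  · -- Finset
    refine ⟨Finset.image (fun i : Fin k => (((false : Bool), i), ((true : Bool), i))) Finset.univ, ?_, ?_⟩
    · ext e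
      simp [S, eq_comm]
    · rw [Finset.card_image_of_injective _ (fun i j h => by
        simpa using congrArg (fun x => (x.1.2 : Fin k)) h)]
      simp
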